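/- For the Funk metric F on the unit ball 𝔹ⁿ, the function F̃(x,y) := F(x,y) + Σᵢ F_{xⁱ}(x,y)·xⁱ equals (√(|y|² − (|x|²|y|² − ⟨x,y⟩²)) + ⟨x,y⟩)² / ((1−|x|²)² √(|y|² − (|x|²|y|² − ⟨x,y⟩²))), for |x| < 1 and y with |y|² − (|x|²|y|² − ⟨x,y⟩²) > 0. -/

import Mathlib

open scoped RealInnerProductSpace

/-- The Funk metric of the unit ball in ℝⁿ. -/
noncomputable def funkF {n : ℕ} (x y : EuclideanSpace ℝ (Fin n)) : ℝ :=
  (Real.sqrt (‖y‖ ^ 2 - (‖x‖ ^ 2 * ‖y‖ ^ 2 - ⟪x, y⟫ ^ 2)) + ⟪x, y⟫) / (1 - ‖x‖ ^ 2)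

/-- For the Funk metric on the unit ball, `F̃ = F + F_{xⁱ}·xⁱ` has the stated closed form. -/
theorem funk_tilde_formula {n : ℕ} (x y : EuclideanSpace ℝ (Fin n)) (hx : ‖x‖ < 1)
    (hA : 0 < ‖y‖ ^ 2 - (‖x‖ ^ 2 * ‖y‖ ^ 2 - ⟪x, y⟫ ^ 2)) :
    funkF x y
      + ∑ i, fderiv ℝ (fun x' => funkF x' y) x (EuclideanSpace.single i 1) * x i
    = (Real.sqrt (‖y‖ ^ 2 - (‖x‖ ^ 2 * ‖y‖ ^ 2 - ⟪x, y⟫ ^ 2)) + ⟪x, y⟫) ^ 2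
        / ((1 - ‖x‖ ^ 2) ^ 2
            * Real.sqrt (‖y‖ ^ 2 - (‖x‖ ^ 2 * ‖y‖ ^ 2 - ⟪x, y⟫ ^ 2))) := by
  set L := fderiv ℝ (fun x' => funkF x' y) x with hL
  have hC : (0:ℝ) < 1 - ‖x‖ ^ 2 := by nlinarith [norm_nonneg x]
  have hC0 : (1:ℝ) - ‖x‖ ^ 2 ≠ 0 := ne_of_gt hC
  have hs : 0 < Real.sqrt (‖y‖ ^ 2 - (‖x‖ ^ 2 * ‖y‖ ^ 2 - ⟪x, y⟫ ^ 2)) := Real.sqrt_pos.mpr hA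
  -- the sum equals `L x`
  have hxsum : ∑ i, x i • EuclideanSpace.single i (1:ℝ) = x := by
    simpa [EuclideanSpace.basisFun_apply] using (EuclideanSpace.basisFun (Fin n) ℝ).sum_repr x
  have hsum : ∑ i, L (EuclideanSpace.single i 1) * x i = L x := by
    conv_rhs => rw [← hxsum]
    rw [map_sum]
    exact Finset.sum_congr rfl fun i _ => by rw [map_smul, smul_eq_mul, mul_comm]
  rw [hsum]
  -- differentiability
  have db : DifferentiableAt ℝ (fun x' : EuclideanSpace ℝ (Fin n) => (⟪x', y⟫:ℝ)) x :=
    DifferentiableAt.inner ℝ differentiableAt_fun_id (differentiableAt_const y)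
  have dn : DifferentiableAt ℝ (fun x' : EuclideanSpace ℝ (Fin n) => ‖x'‖ ^ 2) x :=
    DifferentiableAt.norm_sq ℝ differentiableAt_fun_id
  have dg : DifferentiableAt ℝ
      (fun x' : EuclideanSpace ℝ (Fin n) =>
        ‖y‖ ^ 2 - (‖x'‖ ^ 2 * ‖y‖ ^ 2 - ⟪x', y⟫ ^ 2)) x := by
    apply DifferentiableAt.sub (differentiableAt_const _)
    exact DifferentiableAt.sub (dn.mul_const (‖y‖ ^ 2)) (db.pow 2)
  have dden : DifferentiableAt ℝ (fun x' : EuclideanSpace ℝ (Fin n) => 1 - ‖x'‖ ^ 2) x :=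
    (differentiableAt_const _).sub dn
  have dF : DifferentiableAt ℝ (fun x' => funkF x' y) x := by
    unfold funkF
    simp only [div_eq_mul_inv]
    exact ((dg.sqrt (ne_of_gt hA)).add db).mul (dden.inv hC0)
  -- line t ↦ x + t • x
  have hψ : HasDerivAt (fun t : ℝ => x + t • x) x 0 := by
    simpa using ((hasDerivAt_id (0:ℝ)).smul_const x).const_add x
  have h0 : x + (0:ℝ) • x = x := by simp
  have hFD : HasFDerivAt (fun x' => funkF x' y) L (x + (0:ℝ) • x) := by
    rw [h0]; exact dF.hasFDerivAt
  have hchain : HasDerivAt (fun t : ℝ => funkF (x + t • x) y) (L x) 0 :=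
    by have := hFD.comp_hasDerivAt 0 hψ; exact this
  -- explicit derivative along the line
  have hn := hψ.norm_sq
  have hb := HasDerivAt.inner ℝ hψ (hasDerivAt_const (0:ℝ) y)
  have hg := (hasDerivAt_const (0:ℝ) (‖y‖ ^ 2)).sub ((hn.mul_const (‖y‖ ^ 2)).sub (hb.pow 2))
  have hg0 : ‖y‖ ^ 2 - (‖x + (0:ℝ) • x‖ ^ 2 * ‖y‖ ^ 2 - (⟪x + (0:ℝ) • x, y⟫:ℝ) ^ 2) ≠ 0 := by
    rw [h0]; exact ne_of_gt hA
  have hden0 : (1:ℝ) - ‖x + (0:ℝ) • x‖ ^ 2 ≠ 0 := by rw [h0]; exact hC0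
  have hden := (hasDerivAt_const (0:ℝ) (1:ℝ)).sub hn
  have hline := ((hg.sqrt hg0).add hb).div hden hden0
  have key := hchain.unique (by exact hline)
  rw [key]
  simp only [Pi.sub_apply, Pi.add_apply, Pi.pow_apply, h0, inner_zero_right, zero_add, real_inner_self_eq_norm_sq]
  unfold funkF
  set b := (⟪x, y⟫ : ℝ) with hbdef
  set s := Real.sqrt (‖y‖ ^ 2 - (‖x‖ ^ 2 * ‖y‖ ^ 2 - ⟪x, y⟫ ^ 2)) with hsdef
  have hs2 : s ^ 2 = ‖y‖ ^ 2 - (‖x‖ ^ 2 * ‖y‖ ^ 2 - ⟪x, y⟫ ^ 2) := Real.sq_sqrt hA.le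
  rw [← hbdef] at hs2
  field_simp
  ring_nf
  linear_combination (2 * ‖x‖ ^ 2) * hs2
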